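/- The OCE is concave in the random variable: if u : ℝ → ℝ is concave, then for random variables X, Y on a common probability space and λ ∈ [0,1], OCE_u(λX + (1-λ)Y) ≥ λ·OCE_u(X) + (1-λ)·OCE_u(Y), where OCE_u(Z) := sup_{b ∈ ℝ} (b + E[u(Z - b)]). -/

import Mathlib

open MeasureTheory Set

/-- The optimized certainty equivalent of a random variable `X` under utility `u`. -/
noncomputable def OCE {Ω : Type*} [MeasurableSpace Ω] (μ : Measure Ω)
    (u : ℝ → ℝ) (X : Ω → ℝ) : ℝ :=
  sSup {y : ℝ | ∃ b : ℝ, y = b + ∫ ω, u (X ω - b) ∂μ}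

section Aux

variable {Ω : Type*} [MeasurableSpace Ω] {μ : Measure Ω} [IsProbabilityMeasure μ]
  {u : ℝ → ℝ} {Z : Ω → ℝ} {M : ℝ}

/-- Integrability of `u (Z - b)` for bounded measurable `Z` and continuous `u`. -/
lemma oce_integrable_aux (hu : Continuous u) (hZ : Measurable Z)
    (hM : ∀ ω, |Z ω| ≤ M) (b : ℝ) :
    Integrable (fun ω => u (Z ω - b)) μ := by
  obtain ⟨C, hC⟩ := (isCompact_Icc : IsCompact (Icc (-M - b) (M - b))).exists_bound_of_continuousOn
    hu.continuousOn
  refine (integrable_const C).mono'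
    ((hu.measurable.comp (hZ.sub measurable_const)).aestronglyMeasurable) ?_
  filter_upwards with ω
  have h1 := (abs_le.mp (hM ω)).1
  have h2 := (abs_le.mp (hM ω)).2
  exact hC _ ⟨by linarith, by linarith⟩

/-- If `b ↦ b + u (-b)` is bounded above by `K`, then the OCE candidate set of a bounded
variable is bounded above. -/
lemma oce_bddAbove_aux (hu : Continuous u) (hZ : Measurable Z)
    (hM : ∀ ω, |Z ω| ≤ M) {K : ℝ} (hK : ∀ b : ℝ, b + u (-b) ≤ K) :
    BddAbove {y : ℝ | ∃ b : ℝ, y = b + ∫ ω, u (Z ω - b) ∂μ} := by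
  refine ⟨M + K, ?_⟩
  rintro y ⟨b, rfl⟩
  have hpt : ∀ ω, u (Z ω - b) ≤ M + K - b := by
    intro ω
    have h := hK (b - Z ω)
    have h2 := (abs_le.mp (hM ω)).2
    have hn : -(b - Z ω) = Z ω - b := by ring
    rw [hn] at h
    linarith
  have hint : ∫ ω, u (Z ω - b) ∂μ ≤ ∫ _ω, (M + K - b) ∂μ :=
    integral_mono (oce_integrable_aux hu hZ hM b) (integrable_const _) hpt
  rw [integral_const, probReal_univ] at hint
  simp only [ENNReal.toReal_one, smul_eq_mul, one_mul] at hint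
  linarith

/-- If `b ↦ b + u (-b)` is unbounded above, then the OCE candidate set of a bounded variable
is unbounded above. -/
lemma oce_not_bddAbove_aux (hu_concave : ConcaveOn ℝ Set.univ u) (hu : Continuous u)
    (hZ : Measurable Z) (hM : ∀ ω, |Z ω| ≤ M)
    (hK : ¬ BddAbove (Set.range fun b : ℝ => b + u (-b))) :
    ¬ BddAbove {y : ℝ | ∃ b : ℝ, y = b + ∫ ω, u (Z ω - b) ∂μ} := by
  have hΩ : Nonempty Ω := by
    by_contra h
    rw [not_nonempty_iff] at h
    have h1 : μ Set.univ = 1 := measure_univ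
    rw [Set.univ_eq_empty_iff.mpr h] at h1
    simp at h1
  have hM0 : 0 ≤ M := le_trans (abs_nonneg _) (hM (Classical.arbitrary Ω))
  set h : ℝ → ℝ := fun b => b + u (-b) with hh
  have hconc : ConcaveOn ℝ Set.univ h := by
    constructor
    · exact convex_univ
    · intro x _ y _ a c ha hc hac
      have hcu := hu_concave.2 (Set.mem_univ (-x)) (Set.mem_univ (-y)) ha hc hac
      simp only [smul_eq_mul] at hcu ⊢
      have hn : -(a * x + c * y) = a * (-x) + c * (-y) := by ring
      simp only [hh, hn]
      nlinarith
  have hcont : Continuous h := continuous_id.add (hu.comp continuous_neg)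
  -- main claim: for every N there is b with h (b + M) ≥ N and h (b - M) ≥ N
  have main : ∀ N : ℝ, ∃ b : ℝ, N ≤ h (b + M) ∧ N ≤ h (b - M) := by
    intro N
    rw [not_bddAbove_iff] at hK
    obtain ⟨y1, ⟨c1, rfl⟩, hy1⟩ := hK N
    obtain ⟨xD, _, hxD⟩ :=
      (isCompact_Icc : IsCompact (Icc (c1 - (2*M+1)) (c1 + (2*M+1)))).exists_isMaxOn
        ⟨c1, by constructor <;> linarith⟩ hcont.continuousOn
    obtain ⟨y2, ⟨c2, rfl⟩, hy2⟩ := hK (max N (h xD))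
    have hy1' : N < h c1 := hy1
    have hy2N : N < h c2 := lt_of_le_of_lt (le_max_left _ _) hy2
    have hc2 : c2 ∉ Icc (c1 - (2*M+1)) (c1 + (2*M+1)) := by
      intro hmem
      exact absurd (hxD hmem) (not_le.mpr (lt_of_le_of_lt (le_max_right _ _) hy2))
    have hfar : 2 * M < |c2 - c1| := by
      rw [Set.mem_Icc] at hc2
      push_neg at hc2
      rcases le_or_gt (c1 - (2*M+1)) c2 with h1 | h1
      · have := hc2 h1
        rw [abs_of_pos (by linarith)]
        linarith
      · rw [abs_of_neg (by linarith)]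
        linarith
    set p := min c1 c2 with hp
    set q := max c1 c2 with hq
    have hpq : 2 * M < q - p := by
      have : q - p = |c2 - c1| := max_sub_min_eq_abs c1 c2
      rw [this]
      exact hfar
    have hpq' : p ≤ q := min_le_max
    have hseg : segment ℝ p q = Icc p q := segment_eq_Icc hpq'
    have hNp : N ≤ h p := by
      rcases min_choice c1 c2 with hc | hc <;> rw [hp, hc] <;> [exact hy1'.le; exact hy2N.le]
    have hNq : N ≤ h q := by
      rcases max_choice c1 c2 with hc | hc <;> rw [hq, hc] <;> [exact hy1'.le; exact hy2N.le]
    refine ⟨(p + q) / 2, ?_, ?_⟩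
    · refine le_trans (le_min hNp hNq) (hconc.ge_on_segment (Set.mem_univ p) (Set.mem_univ q) ?_)
      rw [hseg]
      constructor <;> [linarith; linarith]
    · refine le_trans (le_min hNp hNq) (hconc.ge_on_segment (Set.mem_univ p) (Set.mem_univ q) ?_)
      rw [hseg]
      constructor <;> [linarith; linarith]
  rintro ⟨K, hK0⟩
  obtain ⟨b, hb1, hb2⟩ := main (K + M + 1)
  have hmem : (b + ∫ ω, u (Z ω - b) ∂μ) ∈
      {y : ℝ | ∃ b : ℝ, y = b + ∫ ω, u (Z ω - b) ∂μ} := ⟨b, rfl⟩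
  have hle : b + ∫ ω, u (Z ω - b) ∂μ ≤ K := hK0 hmem
  -- lower bound the element
  have hpt : ∀ ω, min (u (-M - b)) (u (M - b)) ≤ u (Z ω - b) := by
    intro ω
    refine hu_concave.ge_on_segment (Set.mem_univ (-M - b)) (Set.mem_univ (M - b)) ?_
    rw [segment_eq_Icc (by linarith : -M - b ≤ M - b)]
    have h1 := (abs_le.mp (hM ω)).1
    have h2 := (abs_le.mp (hM ω)).2
    constructor <;> [linarith; linarith]
  have hint : ∫ _ω, min (u (-M - b)) (u (M - b)) ∂μ ≤ ∫ ω, u (Z ω - b) ∂μ :=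
    integral_mono (integrable_const _) (oce_integrable_aux hu hZ hM b) hpt
  rw [integral_const, probReal_univ] at hint
  simp only [ENNReal.toReal_one, smul_eq_mul, one_mul] at hint
  have e1 : b + u (-M - b) = h (b + M) - M := by
    have hn : -(b + M) = -M - b := by ring
    simp only [hh, hn]
    ring
  have e2 : b + u (M - b) = h (b - M) + M := by
    have hn : -(b - M) = M - b := by ring
    simp only [hh, hn]
    ring
  have : K + 1 ≤ b + min (u (-M - b)) (u (M - b)) := by
    rcases min_cases (u (-M - b)) (u (M - b)) with ⟨hc, _⟩ | ⟨hc, _⟩ <;> rw [hc]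
    · linarith
    · linarith
  linarith

/-- The key element-wise inequality for the OCE candidate sets. -/
lemma oce_key_aux {X Y : Ω → ℝ} {lam : ℝ} (hlam : lam ∈ Set.Icc (0 : ℝ) 1)
    (hu_concave : ConcaveOn ℝ Set.univ u) (hu : Continuous u)
    (hX : Measurable X) (hY : Measurable Y)
    (hMX : ∀ ω, |X ω| ≤ M) (hMY : ∀ ω, |Y ω| ≤ M) (b1 b2 : ℝ) :
    lam * (b1 + ∫ ω, u (X ω - b1) ∂μ) + (1 - lam) * (b2 + ∫ ω, u (Y ω - b2) ∂μ) ≤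
      (lam * b1 + (1 - lam) * b2) +
        ∫ ω, u (lam * X ω + (1 - lam) * Y ω - (lam * b1 + (1 - lam) * b2)) ∂μ := by
  obtain ⟨hl0, hl1⟩ := hlam
  have hMcomb : ∀ ω, |lam * X ω + (1 - lam) * Y ω| ≤ M := by
    intro ω
    calc |lam * X ω + (1 - lam) * Y ω| ≤ |lam * X ω| + |(1 - lam) * Y ω| := abs_add_le _ _
      _ = lam * |X ω| + (1 - lam) * |Y ω| := by
          rw [abs_mul, abs_mul, abs_of_nonneg hl0, abs_of_nonneg (by linarith : (0:ℝ) ≤ 1 - lam)]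
      _ ≤ lam * M + (1 - lam) * M := by
          have := hMX ω; have := hMY ω
          have hlm : (0:ℝ) ≤ 1 - lam := by linarith
          gcongr
      _ = M := by ring
  have hiX : Integrable (fun ω => u (X ω - b1)) μ := oce_integrable_aux hu hX hMX b1
  have hiY : Integrable (fun ω => u (Y ω - b2)) μ := oce_integrable_aux hu hY hMY b2
  have hiC : Integrable (fun ω => u (lam * X ω + (1 - lam) * Y ω -
      (lam * b1 + (1 - lam) * b2))) μ :=
    oce_integrable_aux hu ((hX.const_mul lam).add (hY.const_mul (1 - lam))) hMcomb _
  have hpt : ∀ ω, lam * u (X ω - b1) + (1 - lam) * u (Y ω - b2) ≤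
      u (lam * X ω + (1 - lam) * Y ω - (lam * b1 + (1 - lam) * b2)) := by
    intro ω
    have hcu := hu_concave.2 (Set.mem_univ (X ω - b1)) (Set.mem_univ (Y ω - b2)) hl0
      (by linarith : (0:ℝ) ≤ 1 - lam) (by ring)
    simp only [smul_eq_mul] at hcu
    have hn : lam * (X ω - b1) + (1 - lam) * (Y ω - b2) =
        lam * X ω + (1 - lam) * Y ω - (lam * b1 + (1 - lam) * b2) := by ring
    rw [hn] at hcu
    exact hcu
  have hint : ∫ ω, (lam * u (X ω - b1) + (1 - lam) * u (Y ω - b2)) ∂μ ≤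
      ∫ ω, u (lam * X ω + (1 - lam) * Y ω - (lam * b1 + (1 - lam) * b2)) ∂μ :=
    integral_mono ((hiX.const_mul lam).add (hiY.const_mul (1 - lam))) hiC hpt
  rw [integral_add (hiX.const_mul lam) (hiY.const_mul (1 - lam)),
    integral_const_mul, integral_const_mul] at hint
  linarith

end Aux

/-- Concavity of the OCE in the random variable. -/
theorem oce_concave {Ω : Type*} [MeasurableSpace Ω] (μ : Measure Ω)
    [IsProbabilityMeasure μ] (u : ℝ → ℝ) (X Y : Ω → ℝ) (lam : ℝ)
    (hlam : lam ∈ Set.Icc (0 : ℝ) 1)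
    (hu_concave : ConcaveOn ℝ Set.univ u)
    (hu_cont : Continuous u)
    (hX : Measurable X) (hY : Measurable Y)
    (hbound : ∃ M : ℝ, ∀ ω, |X ω| ≤ M ∧ |Y ω| ≤ M) :
    lam * OCE μ u X + (1 - lam) * OCE μ u Y ≤
      OCE μ u (fun ω => lam * X ω + (1 - lam) * Y ω) := by
  obtain ⟨M, hMb⟩ := hbound
  have hMX : ∀ ω, |X ω| ≤ M := fun ω => (hMb ω).1
  have hMY : ∀ ω, |Y ω| ≤ M := fun ω => (hMb ω).2
  obtain ⟨hl0, hl1⟩ := hlam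
  have hMcomb : ∀ ω, |lam * X ω + (1 - lam) * Y ω| ≤ M := by
    intro ω
    calc |lam * X ω + (1 - lam) * Y ω| ≤ |lam * X ω| + |(1 - lam) * Y ω| := abs_add_le _ _
      _ = lam * |X ω| + (1 - lam) * |Y ω| := by
          rw [abs_mul, abs_mul, abs_of_nonneg hl0, abs_of_nonneg (by linarith : (0:ℝ) ≤ 1 - lam)]
      _ ≤ lam * M + (1 - lam) * M := by
          have := hMX ω; have := hMY ω
          have hlm : (0:ℝ) ≤ 1 - lam := by linarith
          gcongr
      _ = M := by ring
  have hCm : Measurable (fun ω => lam * X ω + (1 - lam) * Y ω) :=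
    (hX.const_mul lam).add (hY.const_mul (1 - lam))
  set S1 := {y : ℝ | ∃ b : ℝ, y = b + ∫ ω, u (X ω - b) ∂μ} with hS1
  set S2 := {y : ℝ | ∃ b : ℝ, y = b + ∫ ω, u (Y ω - b) ∂μ} with hS2
  set S3 := {y : ℝ | ∃ b : ℝ, y = b + ∫ ω, u (lam * X ω + (1 - lam) * Y ω - b) ∂μ} with hS3
  have hOX : OCE μ u X = sSup S1 := rfl
  have hOY : OCE μ u Y = sSup S2 := rfl
  have hOC : OCE μ u (fun ω => lam * X ω + (1 - lam) * Y ω) = sSup S3 := rfl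
  rw [hOX, hOY, hOC]
  by_cases hK : BddAbove (Set.range fun b : ℝ => b + u (-b))
  · -- bounded case
    obtain ⟨K, hK0⟩ := hK
    have hK' : ∀ b : ℝ, b + u (-b) ≤ K := fun b => hK0 ⟨b, rfl⟩
    have hB1 : BddAbove S1 := oce_bddAbove_aux hu_cont hX hMX hK'
    have hB2 : BddAbove S2 := oce_bddAbove_aux hu_cont hY hMY hK'
    have hB3 : BddAbove S3 := oce_bddAbove_aux hu_cont hCm hMcomb hK'
    have hne1 : S1.Nonempty := ⟨0 + ∫ ω, u (X ω - 0) ∂μ, 0, rfl⟩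
    have hne2 : S2.Nonempty := ⟨0 + ∫ ω, u (Y ω - 0) ∂μ, 0, rfl⟩
    refine le_of_forall_pos_le_add ?_
    intro ε hε
    obtain ⟨y1, hy1m, hy1⟩ := exists_lt_of_lt_csSup hne1
      (show sSup S1 - ε < sSup S1 by linarith)
    obtain ⟨y2, hy2m, hy2⟩ := exists_lt_of_lt_csSup hne2
      (show sSup S2 - ε < sSup S2 by linarith)
    obtain ⟨b1, rfl⟩ := hy1m
    obtain ⟨b2, rfl⟩ := hy2m
    have hkey := oce_key_aux (μ := μ) ⟨hl0, hl1⟩ hu_concave hu_cont hX hY hMX hMY b1 b2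
    have hmem3 : ((lam * b1 + (1 - lam) * b2) +
        ∫ ω, u (lam * X ω + (1 - lam) * Y ω - (lam * b1 + (1 - lam) * b2)) ∂μ) ∈ S3 :=
      ⟨lam * b1 + (1 - lam) * b2, rfl⟩
    have hle3 := le_csSup hB3 hmem3
    have h1 : lam * sSup S1 ≤ lam * ((b1 + ∫ ω, u (X ω - b1) ∂μ) + ε) :=
      mul_le_mul_of_nonneg_left (by linarith) hl0
    have h2 : (1 - lam) * sSup S2 ≤ (1 - lam) * ((b2 + ∫ ω, u (Y ω - b2) ∂μ) + ε) :=
      mul_le_mul_of_nonneg_left (by linarith) (by linarith)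
    nlinarith
  · -- unbounded case: all three suprema are the junk value 0
    have hnb1 := oce_not_bddAbove_aux (μ := μ) hu_concave hu_cont hX hMX hK
    have hnb2 := oce_not_bddAbove_aux (μ := μ) hu_concave hu_cont hY hMY hK
    have hnb3 := oce_not_bddAbove_aux (μ := μ) hu_concave hu_cont hCm hMcomb hK
    rw [Real.sSup_of_not_bddAbove hnb1, Real.sSup_of_not_bddAbove hnb2,
      Real.sSup_of_not_bddAbove hnb3]
    simp
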